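/- Let 0 < q < 1 and α > 0 be real, w complex with |w| < 1, d an odd positive integer, χ : ℤ → ℂ with period d, and let m be a nonnegative integer and n a positive multiple of d. With Ẽ_{m,q}^{(α,w)}(x | χ) := (1+q) Σ_{j=0}^∞ (-1)^j w^j χ(j) [x+j]_{q^α}^m, one has w^n · Ẽ_{m,q}^{(α,w)}(n | χ) + (-1)^{n-1} Ẽ_{m,q}^{(α,w)}(0 | χ) = (1+q) · Σ_{l=0}^{n-1} (-1)^{n-1-l} χ(l) w^l [l]_{q^α}^m. -/

import Mathlib

/-- The weighted q-bracket `[y]_{q^α} = (1 - q^{αy})/(1 - q^α)`. -/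
noncomputable def qbr (q α y : ℝ) : ℝ := (1 - q ^ (α * y)) / (1 - q ^ α)

/-- Modified Dirichlet-type twisted q-Euler polynomial with weight α. -/
noncomputable def Etil (q α : ℝ) (w : ℂ) (χ : ℤ → ℂ) (m : ℕ) (x : ℝ) : ℂ :=
  (1 + (q : ℂ)) * ∑' j : ℕ, (-1 : ℂ) ^ j * w ^ j * χ j * ((qbr q α (x + j) : ℝ) : ℂ) ^ m

set_option maxHeartbeats 1000000 in
/-- `wⁿ Ẽ_{m,q}^{(α,w)}(n|χ) + (-1)^{n-1} Ẽ_{m,q}^{(α,w)}(0|χ)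
  = (1+q) Σ_{l<n} (-1)^{n-1-l} χ(l) w^l [l]_{q^α}^m` for `d ∣ n`, `n > 0`. -/
theorem twisted_qEuler_recurrence (q α : ℝ) (hq0 : 0 < q) (hq1 : q < 1) (hα : 0 < α)
    (w : ℂ) (hw : ‖w‖ < 1) (d : ℕ) (hd : Odd d) (hd0 : 0 < d)
    (χ : ℤ → ℂ) (hχ : ∀ j : ℤ, χ (j + d) = χ j)
    (m n : ℕ) (hn : 0 < n) (hdn : d ∣ n) :
    w ^ n * Etil q α w χ m n + (-1 : ℂ) ^ (n - 1) * Etil q α w χ m 0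
      = (1 + (q : ℂ)) *
          ∑ l ∈ Finset.range n,
            (-1 : ℂ) ^ (n - 1 - l) * χ l * w ^ l * ((qbr q α l : ℝ) : ℂ) ^ m := by
  -- basic facts about q^α
  have hqα : q ^ α < 1 := Real.rpow_lt_one hq0.le hq1 hα
  have hqα0 : (0:ℝ) < 1 - q ^ α := by linarith
  set D : ℝ := 1 / (1 - q ^ α) with hD
  have hD0 : 0 ≤ D := by positivity
  have hqbr : ∀ y : ℝ, 0 ≤ y → 0 ≤ qbr q α y ∧ qbr q α y ≤ D := by
    intro y hy
    have h1 : q ^ (α * y) ≤ 1 := Real.rpow_le_one hq0.le hq1.le (by positivity)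
    have h2 : 0 < q ^ (α * y) := Real.rpow_pos_of_pos hq0 _
    refine ⟨div_nonneg (by linarith) hqα0.le, ?_⟩
    rw [hD]
    unfold qbr
    gcongr
    · linarith
  -- periodicity on multiples of d
  have hper : ∀ (t : ℕ) (j : ℤ), χ (j + d * t) = χ j := by
    intro t
    induction t with
    | zero => simp
    | succ t ih =>
      intro j
      have h1 : (j : ℤ) + (d:ℤ) * ((t:ℤ)+1) = (j + d * t) + d := by ring
      have h2 : ((d:ℤ) * ((t+1:ℕ):ℤ)) = (d:ℤ) * ((t:ℤ)+1) := by push_cast; ring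
      rw [h2, h1, hχ, ih]
  -- bound on χ over ℕ
  set C : ℝ := ∑ l ∈ Finset.range d, ‖χ l‖ with hC
  have hC0 : 0 ≤ C := Finset.sum_nonneg fun _ _ => norm_nonneg _
  have hχb : ∀ j : ℕ, ‖χ j‖ ≤ C := by
    intro j
    have h1 : (j : ℤ) = ((j % d : ℕ) : ℤ) + (d:ℤ) * ((j / d : ℕ) : ℤ) := by
      push_cast; exact (Int.emod_add_mul_ediv _ _).symm
    have h2 : χ (j : ℤ) = χ ((j % d : ℕ) : ℤ) := by
      rw [h1]; exact hper _ _
    rw [h2]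
    exact Finset.single_le_sum (f := fun l : ℕ => ‖χ l‖) (fun i _ => norm_nonneg _)
      (Finset.mem_range.2 (Nat.mod_lt j hd0))
  -- the master sequence
  set F : ℕ → ℂ := fun k => (-1:ℂ)^k * w^k * χ k * ((qbr q α k : ℝ) : ℂ)^m with hF
  have hFnorm : ∀ k : ℕ, ‖F k‖ ≤ (C * D^m) * ‖w‖^k := by
    intro k
    have hb := hqbr k (Nat.cast_nonneg k)
    have h0 : ‖F k‖ = ‖w‖^k * (‖χ (k:ℤ)‖ * (qbr q α k)^m) := by
      rw [hF]
      simp only [norm_mul, norm_pow, norm_neg, norm_one, one_pow, one_mul, Complex.norm_real,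
        Real.norm_eq_abs, abs_of_nonneg hb.1]
      ring
    rw [h0]
    calc ‖w‖^k * (‖χ (k:ℤ)‖ * (qbr q α k)^m) ≤ ‖w‖^k * (C * D^m) := by
          have hx : ‖χ (k:ℤ)‖ * (qbr q α k)^m ≤ C * D^m := by
            gcongr <;> first
              | exact pow_nonneg hb.1 m | exact hb.1 | exact hb.2 | exact hχb k
          exact mul_le_mul_of_nonneg_left hx (by positivity)
      _ = (C * D^m) * ‖w‖^k := by ring
  have hFs : Summable F :=
    Summable.of_norm_bounded
      ((summable_geometric_of_lt_one (norm_nonneg w) hw).mul_left (C * D^m)) hFnorm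
  -- rewrite Etil at 0
  have hE0 : Etil q α w χ m 0 = (1+(q:ℂ)) * ∑' k, F k := by
    unfold Etil
    congr 1
    apply tsum_congr
    intro j
    rw [hF]
    norm_num
  -- rewrite w^n * Etil n
  have hEn : w^n * Etil q α w χ m n = (1+(q:ℂ)) * ((-1:ℂ)^n * ∑' k, F (k + n)) := by
    unfold Etil
    rw [mul_left_comm]
    congr 1
    rw [← tsum_mul_left, ← tsum_mul_left]
    apply tsum_congr
    intro j
    have hχn : χ (((j + n : ℕ)) : ℤ) = χ (j : ℤ) := by
      obtain ⟨t, rfl⟩ := hdn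
      have h := hper t j
      have e : (((j + d * t : ℕ)) : ℤ) = (j : ℤ) + (d:ℤ) * (t:ℤ) := by push_cast; ring
      rw [e, h]
    have harg : ((n:ℝ) + (j:ℝ)) = (((j + n : ℕ)) : ℝ) := by push_cast; ring
    have hsq : (-1:ℂ)^n * (-1:ℂ)^n = 1 := by
      rw [← pow_add]; exact Even.neg_one_pow ⟨n, rfl⟩
    rw [hF]
    simp only [harg, hχn, pow_add]
    linear_combination (-((-1:ℂ)^j * w^j * w^n * χ (j:ℤ) *
      (((qbr q α ((j+n:ℕ)) : ℝ):ℂ))^m)) * hsq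
  have key : (∑ k ∈ Finset.range n, F k) + ∑' k, F (k + n) = ∑' k, F k :=
    Summable.sum_add_tsum_nat_add n hFs
  -- signs
  have hsign : (-1:ℂ)^(n-1) * (-1) = (-1:ℂ)^n := by
    rw [← pow_succ, Nat.sub_add_cancel hn]
  -- rewrite RHS sum
  have hRHS : ∑ l ∈ Finset.range n, (-1 : ℂ) ^ (n - 1 - l) * χ l * w ^ l * ((qbr q α l : ℝ) : ℂ) ^ m
      = (-1:ℂ)^(n-1) * ∑ l ∈ Finset.range n, F l := by
    rw [Finset.mul_sum]
    apply Finset.sum_congr rfl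
    intro l hl
    have hln : l ≤ n - 1 := by
      have := Finset.mem_range.1 hl; omega
    have h1 : (-1:ℂ)^(n-1-l) * (-1:ℂ)^l = (-1:ℂ)^(n-1) := by
      rw [← pow_add, Nat.sub_add_cancel hln]
    have h2 : (-1:ℂ)^l * (-1:ℂ)^l = 1 := by
      rw [← pow_add]; exact Even.neg_one_pow ⟨l, rfl⟩
    rw [hF]
    linear_combination (χ (l:ℤ) * w^l * (((qbr q α l : ℝ):ℂ))^m) *
      ((-1:ℂ)^l * h1 - (-1:ℂ)^(n-1-l) * h2)
  rw [hEn, hE0, hRHS]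
  have hT : ∑' k, F (k + n) = (∑' k, F k) - ∑ k ∈ Finset.range n, F k := by
    linear_combination key
  rw [hT]
  linear_combination ((1+(q:ℂ)) * (∑ k ∈ Finset.range n, F k - ∑' k, F k)) * hsign
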